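/- Let p be an odd prime and C = ⟨g(x) + u p(x), u ā(x)⟩ a nonzero skew cyclic code of length n over R = F_p[u]/(u^2) as in Theorem (case 3), where ā(x) is (up to unit) a polynomial of minimal degree in C (not monic in C's sense) and g(x)+up(x) has minimal degree r among monic polynomials of C and x^n − 1 = k(x)∗g(x). Then ā(x) divides g(x) mod u in F_p[x], and ((x^n − 1)/g(x)) ∗ u p(x) lies in the left submodule generated by u ā(x). -/

import Mathlib

open TrivSqZeroExt

theorem RingAut.one_apply' {R : Type*} [Ring R] (b : R) : (1 : RingAut R) b = b := rfl

/-- The skew polynomial ring `R[x;θ]`, as finitely supported coefficient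
sequences with multiplication twisted by the ring automorphism `θ`:
`(a x^i) * (b x^j) = a θ^i(b) x^{i+j}`. -/
def SkewPoly (R : Type*) [Ring R] (θ : RingAut R) : Type _ := ℕ →₀ R

namespace SkewPoly

variable {R : Type*} [Ring R] (θ : RingAut R)

/-- The skew-twisted convolution product. -/
noncomputable def mulAux (f g : ℕ →₀ R) : ℕ →₀ R :=
  f.sum fun i a => g.sum fun j b => Finsupp.single (i + j) (a * (θ ^ i) b)

theorem mulAux_zero_left (g : ℕ →₀ R) : mulAux θ 0 g = 0 := Finsupp.sum_zero_index

theorem mulAux_zero_right (f : ℕ →₀ R) : mulAux θ f 0 = 0 := by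
  simp [mulAux, Finsupp.sum_zero_index]

theorem mulAux_add_left (f f' g : ℕ →₀ R) :
    mulAux θ (f + f') g = mulAux θ f g + mulAux θ f' g := by
  unfold mulAux
  apply Finsupp.sum_add_index' <;> intros <;> simp [add_mul, Finsupp.single_add, Finsupp.sum_add]

theorem mulAux_add_right (f g g' : ℕ →₀ R) :
    mulAux θ f (g + g') = mulAux θ f g + mulAux θ f g' := by
  unfold mulAux
  rw [← Finsupp.sum_add]
  apply Finsupp.sum_congr
  intro i _
  apply Finsupp.sum_add_index' <;> intros <;> simp [mul_add, Finsupp.single_add]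

theorem one_mulAux (g : ℕ →₀ R) : mulAux θ (Finsupp.single 0 1) g = g := by
  unfold mulAux
  rw [Finsupp.sum_single_index]
  · simp [RingAut.one_apply', Finsupp.sum_single]
  · simp

theorem mulAux_one (f : ℕ →₀ R) : mulAux θ f (Finsupp.single 0 1) = f := by
  unfold mulAux
  have : ∀ i ∈ f.support, ((Finsupp.single 0 1 : ℕ →₀ R).sum fun j b =>
      Finsupp.single (i + j) (f i * (θ ^ i) b)) = Finsupp.single i (f i) := by
    intro i _
    rw [Finsupp.sum_single_index] <;> simp
  rw [Finsupp.sum_congr this, Finsupp.sum_single f]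

theorem mulAux_single_single (i j : ℕ) (a b : R) :
    mulAux θ (Finsupp.single i a) (Finsupp.single j b) =
      Finsupp.single (i + j) (a * (θ ^ i) b) := by
  unfold mulAux
  rw [Finsupp.sum_single_index, Finsupp.sum_single_index]
  · simp
  · rw [Finsupp.sum_single_index] <;> simp

theorem mulAux_assoc (f g h : ℕ →₀ R) :
    mulAux θ (mulAux θ f g) h = mulAux θ f (mulAux θ g h) := by
  induction f using Finsupp.induction_linear with
  | zero => simp [mulAux_zero_left]
  | add f f' hf hf' => simp [mulAux_add_left, hf, hf']
  | single i a =>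
    induction g using Finsupp.induction_linear with
    | zero => simp [mulAux_zero_left, mulAux_zero_right]
    | add g g' hg hg' => simp [mulAux_add_left, mulAux_add_right, hg, hg']
    | single j b =>
      induction h using Finsupp.induction_linear with
      | zero => simp [mulAux_zero_right]
      | add h h' hh hh' => simp [mulAux_add_right, hh, hh']
      | single k c =>
        rw [mulAux_single_single, mulAux_single_single, mulAux_single_single,
          mulAux_single_single]
        rw [add_assoc, mul_assoc, map_mul, pow_add]
        rfl

variable {θ}

noncomputable instance : AddCommGroup (SkewPoly R θ) := inferInstanceAs (AddCommGroup (ℕ →₀ R))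

/-- Reinterpret a skew polynomial as a finitely supported function. -/
def toFinsupp (f : SkewPoly R θ) : ℕ →₀ R := f

/-- Build a skew polynomial out of a finitely supported function. -/
def ofFinsupp (f : ℕ →₀ R) : SkewPoly R θ := f

noncomputable instance : Ring (SkewPoly R θ) where
  __ := (inferInstance : AddCommGroup (SkewPoly R θ))
  mul f g := mulAux θ (toFinsupp f) (toFinsupp g)
  one := Finsupp.single 0 1
  left_distrib f g h := mulAux_add_right θ (toFinsupp f) (toFinsupp g) (toFinsupp h)
  right_distrib f g h := mulAux_add_left θ (toFinsupp f) (toFinsupp g) (toFinsupp h)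
  zero_mul := mulAux_zero_left θ
  mul_zero := mulAux_zero_right θ
  mul_assoc := mulAux_assoc θ
  one_mul := one_mulAux θ
  mul_one := mulAux_one θ

variable (θ) in
/-- The constant skew polynomial `a`. -/
noncomputable def C (a : R) : SkewPoly R θ := ofFinsupp (Finsupp.single 0 a)

variable (θ) in
/-- The variable `x` of the skew polynomial ring. -/
noncomputable def X : SkewPoly R θ := ofFinsupp (Finsupp.single 1 1)

/-- The `n`-th coefficient of a skew polynomial. -/
def coeff (f : SkewPoly R θ) (n : ℕ) : R := toFinsupp f n

/-- The degree of a skew polynomial (`⊥` for the zero polynomial). -/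
def degree (f : SkewPoly R θ) : WithBot ℕ := (toFinsupp f).support.max

/-- The degree of a skew polynomial as a natural number. -/
def natDegree (f : SkewPoly R θ) : ℕ := (degree f).unbotD 0

/-- The leading coefficient of a skew polynomial. -/
def leadingCoeff (f : SkewPoly R θ) : R := coeff f (natDegree f)

/-- A skew polynomial is monic if its leading coefficient is `1`. -/
def Monic (f : SkewPoly R θ) : Prop := leadingCoeff f = 1

end SkewPoly

/-- The inclusion of `F_p[x]` into the skew polynomial ring
`(F_p + u F_p)[x;θ]` (coefficientwise `a ↦ a + u·0`); this is the natural
embedding of `F_p[x]` as a subring of `R[x;θ]` since `θ` fixes `F_p`. -/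
noncomputable def SkewPoly.ofPoly {p : ℕ}
    (θ : RingAut (DualNumber (ZMod p))) (f : Polynomial (ZMod p)) :
    SkewPoly (DualNumber (ZMod p)) θ :=
  SkewPoly.ofFinsupp
    (Finsupp.mapRange (inl : ZMod p → DualNumber (ZMod p)) (inl_zero (ZMod p)) f.toFinsupp.coeff)

/-- Reduction of a skew polynomial over `F_p + u F_p` modulo `u`, i.e. the
polynomial in `F_p[x]` whose coefficients are the first components of the
coefficients. -/
noncomputable def SkewPoly.fstPoly {p : ℕ}
    {θ : RingAut (DualNumber (ZMod p))} (f : SkewPoly (DualNumber (ZMod p)) θ) :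
    Polynomial (ZMod p) :=
  Polynomial.ofFinsupp (AddMonoidAlgebra.ofCoeff
    (Finsupp.mapRange TrivSqZeroExt.fst fst_zero (SkewPoly.toFinsupp f)))


section Helpers
open SkewPoly DualNumber Polynomial

variable {p : ℕ} [hpf : Fact p.Prime] {θ : RingAut (DualNumber (ZMod p))}

lemma SkewPoly.mul_def' {R : Type*} [Ring R] {θ : RingAut R} (f g : SkewPoly R θ) :
    SkewPoly.toFinsupp (f * g) =
      SkewPoly.mulAux θ (SkewPoly.toFinsupp f) (SkewPoly.toFinsupp g) := rfl

lemma theta_pow_succ (i : ℕ) (x : DualNumber (ZMod p)) :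
    (θ ^ (i + 1)) x = θ ((θ ^ i) x) := by
  rw [pow_succ']
  rfl

lemma theta_inl (a : ZMod p) : θ (inl a : DualNumber (ZMod p)) = inl a := by
  have h1 : (inl a : DualNumber (ZMod p)) = ((a.val : ℕ) : DualNumber (ZMod p)) := by
    rw [← TrivSqZeroExt.inl_natCast, ZMod.natCast_val, ZMod.cast_id]
  rw [h1, map_natCast]

lemma theta_pow_inl (i : ℕ) (a : ZMod p) :
    (θ ^ i) (inl a : DualNumber (ZMod p)) = inl a := by
  induction i with
  | zero => simp [pow_zero, RingAut.one_apply']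
  | succ i ih => rw [theta_pow_succ, ih, theta_inl]

/-- The scalar `c` with `θ(ε) = c ε`. -/
noncomputable def cc (θ : RingAut (DualNumber (ZMod p))) : ZMod p := TrivSqZeroExt.snd (θ ε)

lemma fst_theta_eps : TrivSqZeroExt.fst (θ (ε : DualNumber (ZMod p))) = 0 := by
  have h : (θ ε) * (θ ε) = 0 := by rw [← map_mul, eps_mul_eps, map_zero]
  have h2 : TrivSqZeroExt.fst (θ (ε : DualNumber (ZMod p))) *
      TrivSqZeroExt.fst (θ (ε : DualNumber (ZMod p))) = 0 := by
    rw [← TrivSqZeroExt.fst_mul, h, TrivSqZeroExt.fst_zero]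
  exact mul_self_eq_zero.mp h2

lemma theta_eps : θ (ε : DualNumber (ZMod p)) = inr (cc θ) := by
  conv_lhs => rw [← TrivSqZeroExt.inl_fst_add_inr_snd_eq (θ ε)]
  rw [fst_theta_eps, TrivSqZeroExt.inl_zero, zero_add]
  rfl

lemma cc_ne_zero : cc θ ≠ 0 := by
  intro h
  have h1 : θ (ε : DualNumber (ZMod p)) = 0 := by
    rw [theta_eps, h, TrivSqZeroExt.inr_zero]
  have h2 : (ε : DualNumber (ZMod p)) = 0 := by
    have := θ.injective (h1.trans (map_zero θ).symm)
    exact this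
  have h3 : (1 : ZMod p) = 0 := by
    have := congrArg TrivSqZeroExt.snd h2
    simpa using this
  exact one_ne_zero h3

lemma theta_inr (b : ZMod p) :
    θ (inr b : DualNumber (ZMod p)) = inr (cc θ * b) := by
  have h : (inr b : DualNumber (ZMod p)) = inl b * ε := by ext <;> simp
  rw [h, map_mul, theta_inl, theta_eps]
  ext <;> simp [mul_comm]

lemma theta_pow_inr (i : ℕ) (b : ZMod p) :
    (θ ^ i) (inr b : DualNumber (ZMod p)) = inr (cc θ ^ i * b) := by
  induction i with
  | zero => simp [pow_zero, RingAut.one_apply']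
  | succ i ih => rw [theta_pow_succ, ih, theta_inr, pow_succ]; ring_nf

lemma eps_mul_elt (b : DualNumber (ZMod p)) :
    (ε : DualNumber (ZMod p)) * b = inr (TrivSqZeroExt.fst b) := by
  ext <;> simp

lemma mul_inr_elt (a : DualNumber (ZMod p)) (b : ZMod p) :
    a * (inr b : DualNumber (ZMod p)) = inr (TrivSqZeroExt.fst a * b) := by
  ext <;> simp [mul_comm]

/-- `u·m(x)` as a skew polynomial. -/
noncomputable def uOf (θ : RingAut (DualNumber (ZMod p))) (m : Polynomial (ZMod p)) :
    SkewPoly (DualNumber (ZMod p)) θ :=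
  SkewPoly.C θ ε * SkewPoly.ofPoly θ m

lemma Finsupp.sum_single_comp {A B : Type*} [AddCommMonoid A] [AddCommMonoid B]
    (f : ℕ →₀ A) (h : A → B) (h0 : h 0 = 0) (hadd : ∀ a b, h (a + b) = h a + h b) :
    (f.sum fun j a => Finsupp.single j (h a)) = Finsupp.mapRange h h0 f := by
  induction f using Finsupp.induction_linear with
  | zero => simp
  | add f g hf hg =>
      rw [Finsupp.sum_add_index' (fun i => by simp [h0]) (fun i a b => by simp [hadd,
        Finsupp.single_add]), hf, hg, Finsupp.mapRange_add hadd]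
  | single i a => rw [Finsupp.sum_single_index (by simp [h0]), Finsupp.mapRange_single]

lemma uOf_toFinsupp (m : Polynomial (ZMod p)) :
    SkewPoly.toFinsupp (uOf θ m) =
      Finsupp.mapRange (inr : ZMod p → DualNumber (ZMod p)) (TrivSqZeroExt.inr_zero (ZMod p))
        m.toFinsupp.coeff := by
  show SkewPoly.mulAux θ (Finsupp.single 0 ε)
      (Finsupp.mapRange inl (TrivSqZeroExt.inl_zero (ZMod p)) m.toFinsupp.coeff) = _
  unfold SkewPoly.mulAux
  rw [Finsupp.sum_single_index (by simp)]
  rw [Finsupp.sum_mapRange_index (by simp)]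
  have : ∀ j : ℕ, ∀ b : ZMod p,
      Finsupp.single (0 + j) (ε * (θ ^ 0) (inl b : DualNumber (ZMod p))) =
        Finsupp.single j (inr b : DualNumber (ZMod p)) := by
    intro j b
    rw [zero_add, pow_zero, RingAut.one_apply', eps_mul_elt, TrivSqZeroExt.fst_inl]
  simp only [this]
  exact Finsupp.sum_single_comp _ _ (TrivSqZeroExt.inr_zero (ZMod p)) (fun a b => TrivSqZeroExt.inr_add _ a b)

lemma SkewPoly.tf_inj {R : Type*} [Ring R] {θ : RingAut R} {f g : SkewPoly R θ}
    (h : SkewPoly.toFinsupp f = SkewPoly.toFinsupp g) : f = g := h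

lemma SkewPoly.toFinsupp_ofFinsupp {R : Type*} [Ring R] {θ : RingAut R} (f0 : ℕ →₀ R) :
    SkewPoly.toFinsupp (SkewPoly.ofFinsupp f0 : SkewPoly R θ) = f0 := rfl

lemma SkewPoly.toFinsupp_add' {R : Type*} [Ring R] {θ : RingAut R} (f g : SkewPoly R θ) :
    SkewPoly.toFinsupp (f + g) = SkewPoly.toFinsupp f + SkewPoly.toFinsupp g := rfl

lemma SkewPoly.single_mul_single {R : Type*} [Ring R] {θ : RingAut R} (i j : ℕ) (a b : R) :
    (SkewPoly.ofFinsupp (Finsupp.single i a) : SkewPoly R θ) *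
        SkewPoly.ofFinsupp (Finsupp.single j b) =
      SkewPoly.ofFinsupp (Finsupp.single (i + j) (a * (θ ^ i) b)) :=
  SkewPoly.tf_inj ((SkewPoly.mul_def' _ _).trans (SkewPoly.mulAux_single_single θ i j a b))

/-- `ψ(f)` is the polynomial with `f * uOf m = uOf (ψ(f) * m)`. -/
noncomputable def psi (θ : RingAut (DualNumber (ZMod p))) (f : SkewPoly (DualNumber (ZMod p)) θ) :
    Polynomial (ZMod p) :=
  Polynomial.ofFinsupp (AddMonoidAlgebra.ofCoeff ((SkewPoly.toFinsupp f).sum fun i a =>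
    Finsupp.single i (cc θ ^ i * TrivSqZeroExt.fst a)))

lemma psi_zero : psi θ (0 : SkewPoly (DualNumber (ZMod p)) θ) = 0 := by
  unfold psi
  rw [show SkewPoly.toFinsupp (0 : SkewPoly (DualNumber (ZMod p)) θ) = 0 from rfl,
    Finsupp.sum_zero_index, AddMonoidAlgebra.ofCoeff_zero, Polynomial.ofFinsupp_zero]

lemma psi_add (f g : SkewPoly (DualNumber (ZMod p)) θ) :
    psi θ (f + g) = psi θ f + psi θ g := by
  unfold psi
  rw [SkewPoly.toFinsupp_add', Finsupp.sum_add_index' (fun i => by simp)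
    (fun i a b => by rw [TrivSqZeroExt.fst_add, mul_add, Finsupp.single_add]),
    AddMonoidAlgebra.ofCoeff_add, Polynomial.ofFinsupp_add]

lemma psi_single (i : ℕ) (a : DualNumber (ZMod p)) :
    psi θ (SkewPoly.ofFinsupp (Finsupp.single i a)) =
      Polynomial.monomial i (cc θ ^ i * TrivSqZeroExt.fst a) := by
  unfold psi
  rw [SkewPoly.toFinsupp_ofFinsupp, Finsupp.sum_single_index (by simp),
    AddMonoidAlgebra.ofCoeff_single, Polynomial.ofFinsupp_single]

lemma uOf_zero : uOf θ (0 : Polynomial (ZMod p)) = 0 := by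
  apply SkewPoly.tf_inj
  rw [uOf_toFinsupp, Polynomial.toFinsupp_zero, AddMonoidAlgebra.coeff_zero, Finsupp.mapRange_zero]
  rfl

lemma uOf_add (m₁ m₂ : Polynomial (ZMod p)) :
    uOf θ (m₁ + m₂) = uOf θ m₁ + uOf θ m₂ := by
  apply SkewPoly.tf_inj
  rw [SkewPoly.toFinsupp_add', uOf_toFinsupp, uOf_toFinsupp, uOf_toFinsupp,
    Polynomial.toFinsupp_add, AddMonoidAlgebra.coeff_add, Finsupp.mapRange_add (fun a b => TrivSqZeroExt.inr_add _ a b)]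

lemma uOf_monomial (j : ℕ) (d : ZMod p) :
    uOf θ (Polynomial.monomial j d) =
      SkewPoly.ofFinsupp (Finsupp.single j (inr d)) := by
  apply SkewPoly.tf_inj
  rw [uOf_toFinsupp, Polynomial.toFinsupp_monomial, AddMonoidAlgebra.coeff_single, Finsupp.mapRange_single,
    SkewPoly.toFinsupp_ofFinsupp]

lemma single_mul_uOf (i : ℕ) (a : DualNumber (ZMod p)) (m : Polynomial (ZMod p)) :
    SkewPoly.ofFinsupp (Finsupp.single i a) * uOf θ m =
      uOf θ (Polynomial.monomial i (cc θ ^ i * TrivSqZeroExt.fst a) * m) := by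
  induction m using Polynomial.induction_on' with
  | add q r hq hr => rw [uOf_add, mul_add, hq, hr, mul_add, uOf_add]
  | monomial j d =>
      rw [uOf_monomial, SkewPoly.single_mul_single, theta_pow_inr, mul_inr_elt,
        Polynomial.monomial_mul_monomial, uOf_monomial]
      congr 2
      ring

lemma mul_uOf (f : SkewPoly (DualNumber (ZMod p)) θ) (m : Polynomial (ZMod p)) :
    f * uOf θ m = uOf θ (psi θ f * m) := by
  have key : ∀ f0 : ℕ →₀ DualNumber (ZMod p),
      SkewPoly.ofFinsupp f0 * uOf θ m = uOf θ (psi θ (SkewPoly.ofFinsupp f0) * m) := by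
    intro f0
    induction f0 using Finsupp.induction_linear with
    | zero =>
        rw [show (SkewPoly.ofFinsupp (0 : ℕ →₀ DualNumber (ZMod p)) :
          SkewPoly (DualNumber (ZMod p)) θ) = 0 from rfl, psi_zero, zero_mul, zero_mul, uOf_zero]
    | add f g hf hg =>
        rw [show (SkewPoly.ofFinsupp (f + g) : SkewPoly (DualNumber (ZMod p)) θ) =
          SkewPoly.ofFinsupp f + SkewPoly.ofFinsupp g from rfl, add_mul, hf, hg, psi_add,
          add_mul, uOf_add]
    | single i a => rw [psi_single, single_mul_uOf]
  exact key f

lemma exists_mul_uOf (q m : Polynomial (ZMod p)) :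
    ∃ f : SkewPoly (DualNumber (ZMod p)) θ, f * uOf θ m = uOf θ (q * m) := by
  suffices h : ∃ f : SkewPoly (DualNumber (ZMod p)) θ, psi θ f = q by
    obtain ⟨f, hf⟩ := h
    exact ⟨f, by rw [mul_uOf, hf]⟩
  induction q using Polynomial.induction_on' with
  | add q r hq hr =>
      obtain ⟨f1, hf1⟩ := hq
      obtain ⟨f2, hf2⟩ := hr
      exact ⟨f1 + f2, by rw [psi_add, hf1, hf2]⟩
  | monomial j d =>
      refine ⟨SkewPoly.ofFinsupp (Finsupp.single j (inl ((cc θ ^ j)⁻¹ * d))), ?_⟩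
      rw [psi_single, TrivSqZeroExt.fst_inl, ← mul_assoc,
        mul_inv_cancel₀ (pow_ne_zero _ cc_ne_zero), one_mul]

lemma uOf_eq_zero_iff (m : Polynomial (ZMod p)) : uOf θ m = 0 ↔ m = 0 := by
  constructor
  · intro h
    ext t
    have h1 : SkewPoly.toFinsupp (uOf θ m) = 0 := congrArg SkewPoly.toFinsupp h
    rw [uOf_toFinsupp] at h1
    have h2 := congrFun (congrArg (fun s : ℕ →₀ DualNumber (ZMod p) => (s : ℕ → _)) h1) t
    simp only [Finsupp.mapRange_apply, Finsupp.coe_zero, Pi.zero_apply] at h2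
    have h3 := congrArg TrivSqZeroExt.snd h2
    exact (by simpa using h3 : m.toFinsupp.coeff t = 0)
  · rintro rfl
    exact uOf_zero

lemma uOf_support (m : Polynomial (ZMod p)) :
    (SkewPoly.toFinsupp (uOf θ m)).support = m.support := by
  ext t
  rw [uOf_toFinsupp]
  simp only [Finsupp.mem_support_iff, Finsupp.mapRange_apply, Polynomial.mem_support_iff]
  constructor
  · intro h h2
    exact h (by rw [show m.toFinsupp.coeff t = m.coeff t from rfl, h2, TrivSqZeroExt.inr_zero])
  · intro h h2
    exact h (show m.toFinsupp.coeff t = 0 by simpa using congrArg TrivSqZeroExt.snd h2)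

lemma uOf_degree (m : Polynomial (ZMod p)) :
    SkewPoly.degree (uOf θ m) = m.degree := by
  rw [SkewPoly.degree, uOf_support]
  rfl

lemma eps_skew_mul (f : SkewPoly (DualNumber (ZMod p)) θ) :
    SkewPoly.C θ ε * f = uOf θ (SkewPoly.fstPoly f) := by
  apply SkewPoly.tf_inj
  rw [SkewPoly.mul_def']
  rw [show SkewPoly.toFinsupp (SkewPoly.C θ ε) = Finsupp.single 0 ε from rfl, uOf_toFinsupp]
  unfold SkewPoly.mulAux
  rw [Finsupp.sum_single_index (by simp)]
  have h1 : ∀ j : ℕ, ∀ b : DualNumber (ZMod p),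
      Finsupp.single (0 + j) (ε * (θ ^ 0) b) =
        Finsupp.single j (inr (TrivSqZeroExt.fst b) : DualNumber (ZMod p)) := by
    intro j b
    rw [zero_add, pow_zero, RingAut.one_apply', eps_mul_elt]
  simp only [h1]
  rw [Finsupp.sum_single_comp _ (fun b => (inr (TrivSqZeroExt.fst b) : DualNumber (ZMod p)))
    (by simp) (fun a b => by simp [TrivSqZeroExt.fst_add, TrivSqZeroExt.inr_add, add_smul])]
  apply Finsupp.ext
  intro t
  rw [Finsupp.mapRange_apply, Finsupp.mapRange_apply,
    show (SkewPoly.fstPoly f).toFinsupp.coeff = Finsupp.mapRange TrivSqZeroExt.fst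
      TrivSqZeroExt.fst_zero (SkewPoly.toFinsupp f) from rfl, Finsupp.mapRange_apply]

lemma eps_sq : SkewPoly.C θ ε * SkewPoly.C θ ε = (0 : SkewPoly (DualNumber (ZMod p)) θ) := by
  have h : SkewPoly.C θ ε = (SkewPoly.ofFinsupp (Finsupp.single 0 ε) :
      SkewPoly (DualNumber (ZMod p)) θ) := rfl
  rw [h, SkewPoly.single_mul_single, pow_zero, RingAut.one_apply', eps_mul_eps,
    Finsupp.single_zero]
  rfl

end Helpers

set_option maxHeartbeats 1600000 in
open SkewPoly DualNumber in
/-- For the code `C = ⟨g(x) + u p(x), u ā(x)⟩` of case (3), where `u ā(x)` is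
of minimal degree in `C`, `g(x) + u p(x)` is monic of minimal degree `r`
among monic polynomials of `C`, and `xⁿ - 1 = k∗g`, one has
`ā ∣ (g mod u)` in `F_p[x]` and `((xⁿ-1)/g) ∗ u p(x) ∈ ⟨u ā(x)⟩`. -/
theorem skew_code_mixed_divisibility (p : ℕ) (hp : p.Prime) (hodd : p ≠ 2)
    (θ : RingAut (DualNumber (ZMod p))) (n : ℕ) (hn : 0 < n)
    (g : SkewPoly (DualNumber (ZMod p)) θ)
    (pp : Polynomial (ZMod p)) (abar : Polynomial (ZMod p)) (habar : abar.Monic)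
    (r : ℕ) (hrn : r ≤ n)
    (hgmonic : SkewPoly.Monic (g + SkewPoly.C θ ε * SkewPoly.ofPoly θ pp))
    (hgdeg : SkewPoly.natDegree (g + SkewPoly.C θ ε * SkewPoly.ofPoly θ pp) = r)
    (ht : abar.natDegree < r)
    (Code : Submodule (SkewPoly (DualNumber (ZMod p)) θ)
      (SkewPoly (DualNumber (ZMod p)) θ ⧸ Ideal.span {SkewPoly.X θ ^ n - 1}))
    (hCode : Code = Submodule.span (SkewPoly (DualNumber (ZMod p)) θ)
      {(Ideal.span {SkewPoly.X θ ^ n - 1}).mkQ (g + SkewPoly.C θ ε * SkewPoly.ofPoly θ pp),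
       (Ideal.span {SkewPoly.X θ ^ n - 1}).mkQ (SkewPoly.C θ ε * SkewPoly.ofPoly θ abar)})
    (hua0 : SkewPoly.C θ ε * SkewPoly.ofPoly θ abar ≠ 0)
    (huamin : ∀ b : SkewPoly (DualNumber (ZMod p)) θ,
      (Ideal.span {SkewPoly.X θ ^ n - 1}).mkQ b ∈ Code → b ≠ 0 →
        SkewPoly.degree b < (n : WithBot ℕ) →
        SkewPoly.degree (SkewPoly.C θ ε * SkewPoly.ofPoly θ abar) ≤ SkewPoly.degree b)
    (hgmin : ∀ b : SkewPoly (DualNumber (ZMod p)) θ,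
      (Ideal.span {SkewPoly.X θ ^ n - 1}).mkQ b ∈ Code → SkewPoly.Monic b →
        SkewPoly.degree b < (n : WithBot ℕ) →
        SkewPoly.degree (g + SkewPoly.C θ ε * SkewPoly.ofPoly θ pp) ≤ SkewPoly.degree b)
    (hk : ∃ k : SkewPoly (DualNumber (ZMod p)) θ, SkewPoly.X θ ^ n - 1 = k * g) :
    abar ∣ SkewPoly.fstPoly g ∧
    ∀ k : SkewPoly (DualNumber (ZMod p)) θ, SkewPoly.X θ ^ n - 1 = k * g →
      (Ideal.span {SkewPoly.X θ ^ n - 1}).mkQ (k * (SkewPoly.C θ ε * SkewPoly.ofPoly θ pp)) ∈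
        Submodule.span (SkewPoly (DualNumber (ZMod p)) θ)
          {(Ideal.span {SkewPoly.X θ ^ n - 1}).mkQ (SkewPoly.C θ ε * SkewPoly.ofPoly θ abar)} := by
  haveI : Fact p.Prime := ⟨hp⟩
  set G := g + SkewPoly.C θ ε * SkewPoly.ofPoly θ pp with hG
  have habar0 : abar ≠ 0 := habar.ne_zero
  have hGmem : (Ideal.span {SkewPoly.X θ ^ n - 1}).mkQ G ∈ Code := by
    rw [hCode]; exact Submodule.subset_span (Set.mem_insert _ _)
  have huamem : (Ideal.span {SkewPoly.X θ ^ n - 1}).mkQ (SkewPoly.C θ ε * SkewPoly.ofPoly θ abar) ∈ Code := by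
    rw [hCode]; exact Submodule.subset_span (Set.mem_insert_of_mem _ rfl)
  have key : ∀ m : Polynomial (ZMod p), (Ideal.span {SkewPoly.X θ ^ n - 1}).mkQ (uOf θ m) ∈ Code → m %ₘ abar = 0 := by
    intro m hm
    by_contra hrem
    have h1 : m %ₘ abar + abar * (m /ₘ abar) = m := Polynomial.modByMonic_add_div m abar
    obtain ⟨f, hf⟩ := exists_mul_uOf (θ := θ) (m /ₘ abar) abar
    have h2 : uOf θ (m %ₘ abar) + uOf θ (abar * (m /ₘ abar)) = uOf θ m := by
      rw [← uOf_add, h1]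
    have h3 : uOf θ (abar * (m /ₘ abar)) = f * uOf θ abar := by
      rw [hf, mul_comm abar]
    have heq : uOf θ (m %ₘ abar) = uOf θ m - f * uOf θ abar := by
      rw [← h3]; exact eq_sub_of_add_eq h2
    have hmem2 : (Ideal.span {SkewPoly.X θ ^ n - 1}).mkQ (uOf θ (m %ₘ abar)) ∈ Code := by
      rw [heq, map_sub]
      refine Submodule.sub_mem Code hm ?_
      rw [← smul_eq_mul, map_smul]
      exact Submodule.smul_mem Code f huamem
    have hdeglt : (m %ₘ abar).degree < abar.degree := Polynomial.degree_modByMonic_lt m habar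
    have hlt : SkewPoly.degree (uOf θ (m %ₘ abar)) < (n : WithBot ℕ) := by
      rw [uOf_degree]
      refine lt_trans hdeglt ?_
      rw [Polynomial.degree_eq_natDegree habar0]
      exact_mod_cast lt_of_lt_of_le ht hrn
    have hne : uOf θ (m %ₘ abar) ≠ 0 := fun h => hrem ((uOf_eq_zero_iff _).mp h)
    have hmin := huamin (uOf θ (m %ₘ abar)) hmem2 hne hlt
    have h5 : SkewPoly.degree (SkewPoly.C θ ε * SkewPoly.ofPoly θ abar) = abar.degree :=
      uOf_degree abar
    rw [h5, uOf_degree] at hmin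
    exact absurd hdeglt (not_lt.mpr hmin)
  constructor
  · have hC : SkewPoly.C θ ε * G = uOf θ (SkewPoly.fstPoly g) := by
      rw [hG, mul_add, eps_skew_mul g, ← mul_assoc, eps_sq, zero_mul, add_zero]
    have hmemg : (Ideal.span {SkewPoly.X θ ^ n - 1}).mkQ (uOf θ (SkewPoly.fstPoly g)) ∈ Code := by
      rw [← hC, ← smul_eq_mul, map_smul]
      exact Submodule.smul_mem Code _ hGmem
    exact (Polynomial.modByMonic_eq_zero_iff_dvd habar).mp (key _ hmemg)
  · intro k hk'
    have h1 : k * (SkewPoly.C θ ε * SkewPoly.ofPoly θ pp) = uOf θ (psi θ k * pp) :=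
      mul_uOf k pp
    have h3 : uOf θ (psi θ k * pp) = k * G - (SkewPoly.X θ ^ n - 1) := by
      rw [hG, mul_add, ← hk', ← h1]
      exact (add_sub_cancel_left _ _).symm
    have h2 : (Ideal.span {SkewPoly.X θ ^ n - 1}).mkQ (uOf θ (psi θ k * pp)) ∈ Code := by
      rw [h3, map_sub]
      have h4 : (Ideal.span {SkewPoly.X θ ^ n - 1}).mkQ (SkewPoly.X θ ^ n - 1) = 0 := by
        rw [Submodule.mkQ_apply, Submodule.Quotient.mk_eq_zero]
        exact Submodule.mem_span_singleton_self _
      rw [h4, sub_zero, ← smul_eq_mul, map_smul]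
      exact Submodule.smul_mem Code k hGmem
    have h6 : abar ∣ psi θ k * pp :=
      (Polynomial.modByMonic_eq_zero_iff_dvd habar).mp (key _ h2)
    obtain ⟨d, hd⟩ := h6
    obtain ⟨f, hf⟩ := exists_mul_uOf (θ := θ) d abar
    have h7 : uOf θ (psi θ k * pp) = f * uOf θ abar := by
      rw [hf, mul_comm d abar, ← hd]
    have h8 : (Ideal.span {SkewPoly.X θ ^ n - 1}).mkQ (f * uOf θ abar) =
        f • (Ideal.span {SkewPoly.X θ ^ n - 1}).mkQ (uOf θ abar) := by
      exact map_smul ((Ideal.span {SkewPoly.X θ ^ n - 1}).mkQ) f (uOf θ abar)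
    rw [h1, h7, h8]
    exact Submodule.smul_mem _ f (Submodule.subset_span rfl)
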